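/- Let V be a finite set and let d : V × V → ℝ be a symmetric function with d(i,i) = 0 for all i and d(i,j) > 0 for all i ≠ j, such that for every four (not necessarily distinct) elements i, j, k, l ∈ V, max(d(i,k) + d(j,l), d(i,l) + d(j,k)) ≥ d(i,j) + d(k,l). Then there exists a finite tree T = (U, E) with V ⊆ U and nonnegative edge lengths d_e ≥ 0, e ∈ E, such that d(i,j) = Σ_{e ∈ ph(i,j)} d_e for all i, j ∈ V (i.e., d is a tree metric). -/

import Mathlib

open SimpleGraph Walk

section ParentTree

variable {U : Type} (par : U → U) (ρ : U) (μ : U → ℕ)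

def pGraph : SimpleGraph U := SimpleGraph.fromRel (fun u v => par u = v)

lemma pGraph_adj {u v : U} : (pGraph par).Adj u v ↔ u ≠ v ∧ (par u = v ∨ par v = u) := by
  simp [pGraph, SimpleGraph.fromRel_adj]

variable {par ρ μ}

lemma exists_shift {u a : U} (h : ∃ n, par^[n] u = a) (he : u ≠ a) :
    ∃ n, par^[n] (par u) = a := by
  obtain ⟨n, hn⟩ := h
  cases n with
  | zero => exact absurd hn he
  | succ m => exact ⟨m, by rwa [Function.iterate_succ_apply] at hn⟩

lemma ne_root_of (hρ : par ρ = ρ) {u a : U} (h : ∃ n, par^[n] u = a) (he : u ≠ a) :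
    u ≠ ρ := by
  rintro rfl
  obtain ⟨n, hn⟩ := h
  rw [Function.iterate_fixed hρ] at hn
  exact he hn

lemma adj_par {u a : U} (h : ∃ n, par^[n] u = a) (he : u ≠ a) :
    (pGraph par).Adj u (par u) := by
  rw [pGraph_adj]
  refine ⟨?_, Or.inl rfl⟩
  intro hu
  obtain ⟨n, hn⟩ := h
  rw [Function.iterate_fixed hu.symm] at hn
  exact he hn

variable [DecidableEq U]

def walkTo (hρ : par ρ = ρ) (hμ : ∀ u, u ≠ ρ → μ (par u) < μ u)
    (u a : U) (h : ∃ n, par^[n] u = a) : (pGraph par).Walk u a :=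
  if he : u = a then (SimpleGraph.Walk.nil.copy rfl he)
  else
    SimpleGraph.Walk.cons (adj_par h he) (walkTo hρ hμ (par u) a (exists_shift h he))
termination_by μ u
decreasing_by exact hμ u (ne_root_of hρ h he)

lemma walkTo_support (hρ : par ρ = ρ) (hμ : ∀ u, u ≠ ρ → μ (par u) < μ u)
    {u a : U} (h : ∃ n, par^[n] u = a) :
    ∀ v ∈ (walkTo hρ hμ u a h).support,
      ((∃ n, par^[n] u = v) ∧ (∃ k, par^[k] v = a) ∧ (v = u ∨ μ v < μ u)) := by
  suffices H : ∀ N u a (h : ∃ n, par^[n] u = a), μ u = N →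
      ∀ v ∈ (walkTo hρ hμ u a h).support,
        ((∃ n, par^[n] u = v) ∧ (∃ k, par^[k] v = a) ∧ (v = u ∨ μ v < μ u)) from
    H (μ u) u a h rfl
  intro N
  induction N using Nat.strong_induction_on with
  | _ N ih =>
    intro u a h hN
    subst hN
    rw [walkTo]
    split_ifs with he
    · subst he
      intro v hv
      simp only [Walk.support_copy, Walk.support_nil, List.mem_singleton] at hv
      subst hv
      exact ⟨⟨0, rfl⟩, h, Or.inl rfl⟩
    · intro v hv
      rw [Walk.support_cons, List.mem_cons] at hv
      rcases hv with rfl | hv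
      · exact ⟨⟨0, rfl⟩, h, Or.inl rfl⟩
      · have hlt := hμ u (ne_root_of hρ h he)
        obtain ⟨⟨n, hn⟩, hk, hm⟩ := ih (μ (par u)) hlt (par u) a (exists_shift h he) rfl v hv
        refine ⟨⟨n + 1, by rwa [Function.iterate_succ_apply]⟩, hk, Or.inr ?_⟩
        rcases hm with rfl | hm
        · exact hlt
        · exact hm.trans hlt

lemma walkTo_isPath (hρ : par ρ = ρ) (hμ : ∀ u, u ≠ ρ → μ (par u) < μ u)
    {u a : U} (h : ∃ n, par^[n] u = a) :
    (walkTo hρ hμ u a h).IsPath := by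
  suffices H : ∀ N u a (h : ∃ n, par^[n] u = a), μ u = N →
      (walkTo hρ hμ u a h).IsPath from H (μ u) u a h rfl
  intro N
  induction N using Nat.strong_induction_on with
  | _ N ih =>
    intro u a h hN
    subst hN
    rw [walkTo]
    split_ifs with he
    · subst he; simp
    · have hlt := hμ u (ne_root_of hρ h he)
      refine Walk.IsPath.cons (ih (μ (par u)) hlt (par u) a (exists_shift h he) rfl) ?_
      intro hu
      obtain ⟨_, _, hm⟩ := walkTo_support hρ hμ (exists_shift h he) u hu
      rcases hm with he' | hm
      · exact absurd (congrArg μ he') (ne_of_gt hlt)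
      · exact absurd (hm.trans hlt) (lt_irrefl _)

lemma walkTo_sum (hρ : par ρ = ρ) (hμ : ∀ u, u ≠ ρ → μ (par u) < μ u)
    (w : Sym2 U → ℝ) (ht : U → ℝ)
    (hw : ∀ u, u ≠ ρ → w s(u, par u) = ht u - ht (par u)) {u a : U}
    (h : ∃ n, par^[n] u = a) :
    ((walkTo hρ hμ u a h).edges.map w).sum = ht u - ht a := by
  suffices H : ∀ N u a (h : ∃ n, par^[n] u = a), μ u = N →
      ((walkTo hρ hμ u a h).edges.map w).sum = ht u - ht a from H (μ u) u a h rfl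
  intro N
  induction N using Nat.strong_induction_on with
  | _ N ih =>
    intro u a h hN
    subst hN
    rw [walkTo]
    split_ifs with he
    · subst he; simp
    · have hlt := hμ u (ne_root_of hρ h he)
      rw [Walk.edges_cons, List.map_cons, List.sum_cons,
        ih (μ (par u)) hlt (par u) a (exists_shift h he) rfl,
        hw u (ne_root_of hρ h he)]
      ring

end ParentTree
open SimpleGraph Walk

section ParentTree2

variable {U : Type} {par : U → U} {ρ : U} {μ : U → ℕ}

lemma exists_iterate_root (hρ : par ρ = ρ) (hμ : ∀ u, u ≠ ρ → μ (par u) < μ u) (u : U) :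
    ∃ n, par^[n] u = ρ := by
  suffices H : ∀ N u, μ u = N → ∃ n, par^[n] u = ρ from H (μ u) u rfl
  intro N
  induction N using Nat.strong_induction_on with
  | _ N ih =>
    intro u hN
    by_cases hu : u = ρ
    · exact ⟨0, hu⟩
    · obtain ⟨n, hn⟩ := ih (μ (par u)) (hN ▸ hμ u hu) (par u) rfl
      exact ⟨n + 1, by rwa [Function.iterate_succ_apply]⟩

lemma pGraph_connected (hρ : par ρ = ρ) (hμ : ∀ u, u ≠ ρ → μ (par u) < μ u) :
    (pGraph par).Connected := by
  classical
  have hreach : ∀ u, (pGraph par).Reachable u ρ := by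
    intro u
    exact ⟨walkTo hρ hμ u ρ (exists_iterate_root hρ hμ u)⟩
  haveI : Nonempty U := ⟨ρ⟩
  exact ⟨fun u v => (hreach u).trans (hreach v).symm⟩

lemma pGraph_isAcyclic (hρ : par ρ = ρ) (hμ : ∀ u, u ≠ ρ → μ (par u) < μ u) :
    (pGraph par).IsAcyclic := by
  classical
  intro a c hc
  have hne : c.support ≠ [] := c.support_ne_nil
  obtain ⟨x, hx, hmax⟩ : ∃ x ∈ c.support, ∀ y ∈ c.support, μ y ≤ μ x := by
    obtain ⟨x, hx, hmax⟩ := (c.support.toFinset).exists_max_image μ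
      (by simpa [List.toFinset_eq_empty_iff, ← Finset.nonempty_iff_ne_empty] using hne)
    exact ⟨x, List.mem_toFinset.mp hx, fun y hy => hmax y (List.mem_toFinset.mpr hy)⟩
  set c' := c.rotate x hx with hc'def
  have hc'cyc : c'.IsCycle := hc.rotate hx
  have hsup : ∀ y ∈ c'.support, μ y ≤ μ x := by
    intro y hy
    rw [Walk.support_eq_cons, List.mem_cons] at hy
    rcases hy with rfl | hy
    · exact le_refl _
    · exact hmax y (List.mem_of_mem_tail (((Walk.support_rotate c x hx).mem_iff).mp hy))
  have hnil : ¬ c'.Nil := hc'cyc.not_nil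
  rw [Walk.not_nil_iff] at hnil
  obtain ⟨b, hadj, q, hq⟩ := hnil
  have hparent : ∀ y, (pGraph par).Adj x y →
      y ∈ c'.support → par x = y := by
    intro y hadjy hymem
    rcases ((pGraph_adj par).1 hadjy) with ⟨hne', hor⟩
    rcases hor with h1 | h1
    · exact h1
    · exfalso
      have hyρ : y ≠ ρ := by
        rintro rfl
        rw [hρ] at h1
        exact hne' h1.symm
      exact absurd (lt_of_lt_of_le (h1 ▸ hμ y hyρ) (hsup y hymem)) (lt_irrefl _)
  have hxb : par x = b := by
    refine hparent b hadj ?_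
    rw [hq]
    simp
  obtain ⟨z, q', hadj', hconcat⟩ := Walk.exists_cons_eq_concat hadj q
  have hzmem : z ∈ c'.support := by
    rw [hq, hconcat, Walk.concat_eq_append]
    exact Walk.subset_support_append_left _ _ (Walk.end_mem_support q')
  have hxz : par x = z := hparent z hadj'.symm hzmem
  have hbz : b = z := hxb ▸ hxz
  subst hbz
  have he1 : c'.edges = s(x, b) :: q.edges := by rw [hq]; rfl
  have he2 : c'.edges = q'.edges ++ [s(x, b)] := by
    rw [hq, hconcat, Walk.edges_concat, Sym2.eq_swap]
    simp [List.concat_eq_append]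
  have hnodup : c'.edges.Nodup := hc'cyc.isCircuit.isTrail.edges_nodup
  have hlen : 3 ≤ c'.length := hc'cyc.three_le_length
  have hmem : s(x, b) ∈ q.edges := by
    have heq : s(x, b) :: q.edges = q'.edges ++ [s(x, b)] := he1 ▸ he2
    cases hq' : q'.edges with
    | nil =>
      rw [hq'] at heq
      have := congrArg List.length heq
      simp only [List.length_cons, List.length_append, List.length_nil] at this
      have hql : q.edges.length = q.length := Walk.length_edges q
      have : q.edges.length = 0 := by omega
      have hq0 : q.length = 0 := by omega
      have : c'.length = q.length + 1 := by rw [hq]; simp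
      omega
    | cons e' rest =>
      rw [hq'] at heq
      have : q.edges = rest ++ [s(x, b)] := by
        have := congrArg List.tail heq
        simpa using this
      rw [this]
      simp
  rw [he1] at hnodup
  exact (List.nodup_cons.mp hnodup).1 hmem

end ParentTree2
section Buneman

open Finset

variable {V : Type} [Fintype V]

def Good (d : V → V → ℝ) : Prop :=
  (∀ i j, d i j = d j i) ∧ (∀ i, d i i = 0) ∧ (∀ i j, i ≠ j → 0 < d i j) ∧
    (∀ i j k l, d i j + d k l ≤ max (d i k + d j l) (d i l + d j k))

variable (d : V → V → ℝ) (r : V)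

noncomputable def gp (i j : V) : ℝ := (d r i + d r j - d i j) / 2

lemma gp_self (hd : Good d) (i : V) : gp d r i i = d r i := by
  unfold gp; rw [hd.2.1 i]; ring

lemma gp_comm (hd : Good d) (i j : V) : gp d r i j = gp d r j i := by
  unfold gp; rw [hd.1 i j]; ring

lemma gp_nonneg (hd : Good d) (i j : V) : 0 ≤ gp d r i j := by
  have h := hd.2.2.2 i j r r
  rw [hd.2.1 r, max_self] at h
  have h1 := hd.1 i r; have h2 := hd.1 j r
  unfold gp; linarith

lemma gp_le_left (hd : Good d) (i j : V) : gp d r i j ≤ d r i := by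
  have h := hd.2.2.2 j r i i
  rw [hd.2.1 i, max_self] at h
  have h1 := hd.1 j r; have h2 := hd.1 j i
  unfold gp; linarith

lemma gp_r (hd : Good d) (i : V) : gp d r i r = 0 := by
  unfold gp; rw [hd.2.1 r, hd.1 i r]; ring

lemma gp_min (hd : Good d) (i j k : V) :
    min (gp d r i k) (gp d r j k) ≤ gp d r i j := by
  have h := hd.2.2.2 i j k r
  rcases le_max_iff.mp h with h1 | h1
  · refine min_le_of_left_le ?_
    have e1 := hd.1 k r; have e2 := hd.1 j r
    unfold gp; linarith
  · refine min_le_of_right_le ?_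
    have e1 := hd.1 k r; have e2 := hd.1 i r
    unfold gp; linarith

noncomputable def BB : Finset ℝ :=
  Finset.image (fun p : V × V => gp d r p.1 p.2) Finset.univ

lemma gp_mem_BB (i j : V) : gp d r i j ∈ BB d r :=
  Finset.mem_image_of_mem _ (Finset.mem_univ (i, j))

lemma zero_mem_BB (hd : Good d) : (0 : ℝ) ∈ BB d r := by
  have := gp_mem_BB d r r r
  rwa [gp_r d r hd r] at this

lemma BB_nonneg (hd : Good d) : ∀ b ∈ BB d r, 0 ≤ b := by
  intro b hb
  obtain ⟨p, -, rfl⟩ := Finset.mem_image.mp hb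
  exact gp_nonneg d r hd p.1 p.2

lemma dr_nonneg (hd : Good d) (i : V) : 0 ≤ d r i := by
  rw [← gp_self d r hd i]; exact gp_nonneg d r hd i i

def SS : Type := {p : V × {b : ℝ // b ∈ BB d r} // (p.2 : ℝ) ≤ d r p.1}

noncomputable instance : Fintype (SS d r) := by
  classical
  unfold SS
  infer_instance

def stl (hd : Good d) : Setoid (SS d r) :=
  ⟨fun p q => (p.1.2 : ℝ) = q.1.2 ∧ (p.1.2 : ℝ) ≤ gp d r p.1.1 q.1.1, by
    constructor
    · intro p
      refine ⟨rfl, ?_⟩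
      rw [gp_self d r hd]
      exact p.2
    · intro p q ⟨h1, h2⟩
      refine ⟨h1.symm, ?_⟩
      rw [← h1, gp_comm d r hd]
      exact h2
    · intro p q s ⟨h1, h2⟩ ⟨h3, h4⟩
      refine ⟨h1.trans h3, ?_⟩
      refine le_trans ?_ (gp_min d r hd p.1.1 s.1.1 q.1.1)
      rw [le_min_iff]
      exact ⟨h2, by rw [h1, gp_comm d r hd]; exact h4⟩⟩

def UU (hd : Good d) : Type := Quotient (stl d r hd)

noncomputable def UUFintype (hd : Good d) : Fintype (UU d r hd) := by
  classical
  exact Quotient.fintype _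

def qmk (hd : Good d) (p : SS d r) : UU d r hd := Quotient.mk (stl d r hd) p

noncomputable def vmk (hd : Good d) (i : V) (t : ℝ) : UU d r hd :=
  if h : t ∈ BB d r ∧ t ≤ d r i then qmk d r hd ⟨(i, ⟨t, h.1⟩), h.2⟩
  else qmk d r hd ⟨(r, ⟨0, zero_mem_BB d r hd⟩), le_of_eq (hd.2.1 r).symm⟩

noncomputable def rt (hd : Good d) : UU d r hd := vmk d r hd r 0

lemma vmk_eq (hd : Good d) {i j : V} {t s : ℝ}
    (h1 : t ∈ BB d r) (h2 : t ≤ d r i) (h3 : s ∈ BB d r) (h4 : s ≤ d r j) :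
    vmk d r hd i t = vmk d r hd j s ↔ t = s ∧ t ≤ gp d r i j := by
  unfold vmk
  rw [dif_pos ⟨h1, h2⟩, dif_pos ⟨h3, h4⟩]
  constructor
  · intro h
    exact Quotient.exact h
  · intro h
    exact Quotient.sound h

noncomputable def htU (hd : Good d) : UU d r hd → ℝ :=
  Quotient.lift (fun p : SS d r => (p.1.2 : ℝ)) (fun p q h => h.1)

lemma htU_vmk (hd : Good d) {i : V} {t : ℝ} (h1 : t ∈ BB d r) (h2 : t ≤ d r i) :
    htU d r hd (vmk d r hd i t) = t := by
  unfold vmk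
  rw [dif_pos ⟨h1, h2⟩]
  rfl

lemma vmk_surj (hd : Good d) (u : UU d r hd) :
    ∃ i t, t ∈ BB d r ∧ t ≤ d r i ∧ u = vmk d r hd i t := by
  induction u using Quotient.ind with
  | _ p =>
    refine ⟨p.1.1, p.1.2, p.1.2.2, p.2, ?_⟩
    unfold vmk
    rw [dif_pos ⟨p.1.2.2, p.2⟩]
    exact Quotient.sound ⟨rfl, by rw [gp_self d r hd]; exact p.2⟩

lemma vmk_zero (hd : Good d) (i : V) : vmk d r hd i 0 = rt d r hd := by
  unfold rt
  rw [vmk_eq d r hd (zero_mem_BB d r hd) (dr_nonneg d r hd i) (zero_mem_BB d r hd)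
    (le_of_eq (hd.2.1 r).symm)]
  exact ⟨rfl, by rw [gp_r d r hd]⟩

end Buneman
section Buneman2

open Finset

variable {V : Type} [Fintype V] (d : V → V → ℝ) (r : V)

open scoped Classical in
noncomputable def predB (t : ℝ) : ℝ :=
  if h : ((BB d r).filter (fun b => b < t)).Nonempty
  then ((BB d r).filter (fun b => b < t)).max' h else 0

open scoped Classical in
lemma predB_mem (hd : Good d) (t : ℝ) : predB d r t ∈ BB d r := by
  unfold predB
  split_ifs with h
  · exact (Finset.mem_filter.mp (((BB d r).filter (fun b => b < t)).max'_mem h)).1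
  · exact zero_mem_BB d r hd

open scoped Classical in
lemma predB_lt {t : ℝ} (h : ((BB d r).filter (fun b => b < t)).Nonempty) :
    predB d r t < t := by
  unfold predB
  rw [dif_pos h]
  exact (Finset.mem_filter.mp (((BB d r).filter (fun b => b < t)).max'_mem h)).2

open scoped Classical in
lemma filter_nonempty_of (hd : Good d) {t : ℝ} (ht : t ∈ BB d r) (ht0 : t ≠ 0) :
    ((BB d r).filter (fun b => b < t)).Nonempty :=
  ⟨0, Finset.mem_filter.mpr ⟨zero_mem_BB d r hd,
    lt_of_le_of_ne (BB_nonneg d r hd t ht) (Ne.symm ht0)⟩⟩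

open scoped Classical in
lemma predB_le {t : ℝ} (ht : 0 ≤ t) : predB d r t ≤ t := by
  unfold predB
  split_ifs with h
  · exact le_of_lt (Finset.mem_filter.mp (((BB d r).filter (fun b => b < t)).max'_mem h)).2
  · exact ht

open scoped Classical in
lemma predB_ge {b t : ℝ} (hb : b ∈ BB d r) (hbt : b < t) :
    b ≤ predB d r t := by
  have hmem : b ∈ (BB d r).filter (fun x => x < t) := Finset.mem_filter.mpr ⟨hb, hbt⟩
  have hne : ((BB d r).filter (fun x => x < t)).Nonempty := ⟨b, hmem⟩
  unfold predB
  rw [dif_pos hne]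
  exact Finset.le_max' _ b hmem

open scoped Classical in
lemma predB_zero (hd : Good d) : predB d r 0 = 0 := by
  unfold predB
  split_ifs with h
  · exfalso
    obtain ⟨b, hb⟩ := h
    rw [Finset.mem_filter] at hb
    exact absurd (BB_nonneg d r hd b hb.1) (not_le.mpr hb.2)
  · rfl

open scoped Classical in
lemma card_filter_predB_lt (hd : Good d) {s : ℝ} (hs : s ∈ BB d r) (hs0 : s ≠ 0) :
    ((BB d r).filter (fun b => b < predB d r s)).card <
      ((BB d r).filter (fun b => b < s)).card := by
  have hpl : predB d r s < s := predB_lt d r (filter_nonempty_of d r hd hs hs0)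
  refine Finset.card_lt_card ?_
  rw [Finset.ssubset_def]
  constructor
  · intro b hb
    rw [Finset.mem_filter] at hb ⊢
    exact ⟨hb.1, hb.2.trans hpl⟩
  · intro hsub
    have : predB d r s ∈ (BB d r).filter (fun b => b < s) :=
      Finset.mem_filter.mpr ⟨predB_mem d r hd s, hpl⟩
    have := Finset.mem_filter.mp (hsub this)
    exact absurd this.2 (lt_irrefl _)

noncomputable def parU (hd : Good d) : UU d r hd → UU d r hd :=
  Quotient.lift (fun p : SS d r => vmk d r hd p.1.1 (predB d r p.1.2)) (by
    rintro p q ⟨h1, h2⟩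
    rw [← h1]
    by_cases h0 : (p.1.2 : ℝ) = 0
    · rw [h0, predB_zero d r hd, vmk_zero d r hd, vmk_zero d r hd]
    · have hmem : (p.1.2 : ℝ) ∈ BB d r := p.1.2.2
      have hple : predB d r p.1.2 ≤ (p.1.2 : ℝ) := predB_le d r (BB_nonneg d r hd _ hmem)
      refine (vmk_eq d r hd (predB_mem d r hd _) (hple.trans p.2) (predB_mem d r hd _)
        ?_).mpr ⟨rfl, hple.trans h2⟩
      exact (hple.trans (le_of_eq h1)).trans q.2)

lemma parU_vmk (hd : Good d) {i : V} {t : ℝ} (h1 : t ∈ BB d r) (h2 : t ≤ d r i) :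
    parU d r hd (vmk d r hd i t) = vmk d r hd i (predB d r t) := by
  have hv : vmk d r hd i t = qmk d r hd ⟨(i, ⟨t, h1⟩), h2⟩ := by
    unfold vmk
    rw [dif_pos ⟨h1, h2⟩]
  rw [hv]
  rfl

lemma htU_rt (hd : Good d) : htU d r hd (rt d r hd) = 0 :=
  htU_vmk d r hd (zero_mem_BB d r hd) (le_of_eq (hd.2.1 r).symm)

lemma eq_rt_iff (hd : Good d) {i : V} {t : ℝ} (h1 : t ∈ BB d r) (h2 : t ≤ d r i) :
    vmk d r hd i t = rt d r hd ↔ t = 0 := by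
  unfold rt
  rw [vmk_eq d r hd h1 h2 (zero_mem_BB d r hd) (le_of_eq (hd.2.1 r).symm)]
  constructor
  · exact fun h => h.1
  · rintro rfl
    exact ⟨rfl, le_of_eq (gp_r d r hd i).symm⟩

lemma parU_rt (hd : Good d) : parU d r hd (rt d r hd) = rt d r hd := by
  unfold rt
  rw [parU_vmk d r hd (zero_mem_BB d r hd) (le_of_eq (hd.2.1 r).symm),
    predB_zero d r hd]

open scoped Classical in
noncomputable def μU (hd : Good d) : UU d r hd → ℕ :=
  fun u => ((BB d r).filter (fun b => b < htU d r hd u)).card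

lemma μU_lt (hd : Good d) : ∀ u, u ≠ rt d r hd →
    μU d r hd (parU d r hd u) < μU d r hd u := by
  intro u hu
  obtain ⟨i, t, h1, h2, rfl⟩ := vmk_surj d r hd u
  have ht0 : t ≠ 0 := fun h => hu ((eq_rt_iff d r hd h1 h2).mpr h)
  have hple : predB d r t ≤ t := predB_le d r (BB_nonneg d r hd t h1)
  unfold μU
  rw [parU_vmk d r hd h1 h2, htU_vmk d r hd h1 h2,
    htU_vmk d r hd (predB_mem d r hd t) (hple.trans h2)]
  exact card_filter_predB_lt d r hd h1 ht0

lemma htU_parU_le (hd : Good d) (u : UU d r hd) :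
    htU d r hd (parU d r hd u) ≤ htU d r hd u := by
  obtain ⟨i, t, h1, h2, rfl⟩ := vmk_surj d r hd u
  have hple : predB d r t ≤ t := predB_le d r (BB_nonneg d r hd t h1)
  rw [parU_vmk d r hd h1 h2, htU_vmk d r hd h1 h2,
    htU_vmk d r hd (predB_mem d r hd t) (hple.trans h2)]
  exact hple

lemma htU_iterate_le (hd : Good d) (k : ℕ) (u : UU d r hd) :
    htU d r hd ((parU d r hd)^[k] u) ≤ htU d r hd u := by
  induction k generalizing u with
  | zero => exact le_refl _
  | succ n ih =>
    rw [Function.iterate_succ_apply]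
    exact (ih _).trans (htU_parU_le d r hd u)

lemma iterP (hd : Good d) (i : V) : ∀ (n : ℕ) {t : ℝ}, t ∈ BB d r → t ≤ d r i →
    ∃ s, s ∈ BB d r ∧ s ≤ t ∧ s ≤ d r i ∧
      (parU d r hd)^[n] (vmk d r hd i t) = vmk d r hd i s := by
  intro n
  induction n with
  | zero => exact fun h1 h2 => ⟨_, h1, le_refl _, h2, rfl⟩
  | succ n ih =>
    intro t h1 h2
    obtain ⟨s, hs1, hs2, hs3, hs4⟩ := ih h1 h2
    have hple : predB d r s ≤ s := predB_le d r (BB_nonneg d r hd s hs1)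
    refine ⟨predB d r s, predB_mem d r hd s, hple.trans hs2, (hple.trans hs3), ?_⟩
    rw [Function.iterate_succ_apply', hs4, parU_vmk d r hd hs1 hs3]

lemma anc (hd : Good d) (i : V) : ∀ {s t : ℝ}, s ∈ BB d r → t ∈ BB d r →
    t ≤ s → s ≤ d r i → ∃ n, (parU d r hd)^[n] (vmk d r hd i s) = vmk d r hd i t := by
  suffices H : ∀ (N : ℕ) (s t : ℝ), s ∈ BB d r → t ∈ BB d r → t ≤ s → s ≤ d r i →
      ((BB d r).filter (fun b => b < s)).card = N →
      ∃ n, (parU d r hd)^[n] (vmk d r hd i s) = vmk d r hd i t by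
    intro s t hs ht hts hsd
    exact H _ s t hs ht hts hsd rfl
  intro N
  induction N using Nat.strong_induction_on with
  | _ N ih =>
    intro s t hs ht hts hsd hN
    by_cases hts' : t = s
    · subst hts'
      exact ⟨0, rfl⟩
    · have hlt : t < s := lt_of_le_of_ne hts hts'
      have hs0 : s ≠ 0 := by
        intro h
        rw [h] at hlt
        exact absurd (BB_nonneg d r hd t ht) (not_le.mpr hlt)
      have hple : predB d r s ≤ s := predB_le d r (BB_nonneg d r hd s hs)
      obtain ⟨n, hn⟩ := ih _ (hN ▸ card_filter_predB_lt d r hd hs hs0) (predB d r s) t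
        (predB_mem d r hd s) ht (predB_ge d r ht hlt) (hple.trans hsd) rfl
      refine ⟨n + 1, ?_⟩
      rw [Function.iterate_succ_apply, parU_vmk d r hd hs hsd, hn]

end Buneman2
/-- Buneman's theorem (converse direction): a symmetric function `d` on a finite set `V`,
vanishing on the diagonal, positive off the diagonal, and satisfying the four-point
condition `max (d i k + d j l) (d i l + d j k) ≥ d i j + d k l` for all (not necessarily
distinct) `i j k l`, is a tree metric: there is a finite tree `G` on a vertex set `U`
containing `V` (via an embedding `ι`) with nonnegative edge lengths `w` such that
`d i j` is the sum of the lengths of the edges on the (unique) path from `ι i` to `ι j`. -/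
theorem four_point_is_tree_metric
    {V : Type*} [Fintype V] (d : V → V → ℝ)
    (hsym : ∀ i j : V, d i j = d j i)
    (hdiag : ∀ i : V, d i i = 0)
    (hpos : ∀ i j : V, i ≠ j → 0 < d i j)
    (h4 : ∀ i j k l : V, d i j + d k l ≤ max (d i k + d j l) (d i l + d j k)) :
    ∃ (U : Type) (_ : Fintype U) (G : SimpleGraph U) (_ : G.IsTree)
      (ι : V ↪ U) (w : Sym2 U → ℝ),
      (∀ e ∈ G.edgeSet, 0 ≤ w e) ∧
      ∀ (i j : V) (p : G.Walk (ι i) (ι j)), p.IsPath →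
        d i j = (p.edges.map w).sum := by
  classical
  by_cases hV : Nonempty V
  case neg =>
    haveI : IsEmpty V := not_nonempty_iff.mp hV
    refine ⟨PUnit, inferInstance, ⊥, ?_, ⟨fun _ => PUnit.unit,
      fun {a} {b} _ => Subsingleton.elim a b⟩, fun _ => 0, by simp, fun i => isEmptyElim i⟩
    haveI : Nonempty PUnit := ⟨PUnit.unit⟩
    exact ⟨⟨fun u v => by rw [Subsingleton.elim u v]⟩, SimpleGraph.isAcyclic_bot⟩
  case pos =>
    obtain ⟨v₀⟩ := hV
    set e := Fintype.equivFin V with he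
    set W := Fin (Fintype.card V) with hW
    set d' : W → W → ℝ := fun a b => d (e.symm a) (e.symm b) with hd'
    have hd : Good d' := by
      refine ⟨fun i j => hsym _ _, fun i => hdiag _, fun i j hij => hpos _ _
        (fun h => hij (e.symm.injective h)), fun i j k l => h4 _ _ _ _⟩
    set r : W := e v₀ with hr
    set U := UU d' r hd with hU
    haveI : Fintype U := UUFintype d' r hd
    set par := parU d' r hd with hpar
    set ρ := rt d' r hd with hρ'
    set μ := μU d' r hd with hμ'
    set ht : U → ℝ := htU d' r hd with hht
    have hρ : par ρ = ρ := parU_rt d' r hd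
    have hμ : ∀ u, u ≠ ρ → μ (par u) < μ u := μU_lt d' r hd
    have htree : (pGraph par).IsTree := ⟨pGraph_connected hρ hμ, pGraph_isAcyclic hρ hμ⟩
    -- the embedding
    have hdra : ∀ a : W, d' r a ∈ BB d' r := by
      intro a
      have := gp_mem_BB d' r a a
      rwa [gp_self d' r hd a] at this
    set φ : W → U := fun a => vmk d' r hd a (d' r a) with hφ
    have hφinj : Function.Injective φ := by
      intro a b hab
      rw [hφ] at hab
      dsimp only at hab
      rw [vmk_eq d' r hd (hdra a) (le_refl _) (hdra b) (le_refl _)] at hab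
      obtain ⟨h1, h2⟩ := hab
      by_contra hne
      have hp := hpos (e.symm a) (e.symm b) (fun h => hne (e.symm.injective h))
      have : gp d' r a b = (d' r a + d' r b - d' a b) / 2 := rfl
      rw [this] at h2
      have : (0:ℝ) < d' a b := hp
      linarith
    set w : Sym2 U → ℝ :=
      Sym2.lift ⟨fun a b => |ht a - ht b|, fun a b => abs_sub_comm _ _⟩ with hw'
    have hw : ∀ u, u ≠ ρ → w s(u, par u) = ht u - ht (par u) := by
      intro u hu
      rw [hw', Sym2.lift_mk]
      exact abs_of_nonneg (sub_nonneg.mpr (htU_parU_le d' r hd u))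
    refine ⟨U, inferInstance, pGraph par, htree,
      ⟨fun i => φ (e i), fun {a} {b} hab => e.injective (hφinj hab)⟩, w, ?_, ?_⟩
    · intro ed _
      induction ed using Sym2.ind with
      | _ a b => rw [hw', Sym2.lift_mk]; exact abs_nonneg _
    · intro i j p hp
      set a := e i with ha
      set b := e j with hb
      have hdij : d i j = d' a b := by rw [hd']; simp [ha, hb]
      set g := gp d' r a b with hg
      have hg1 : g ∈ BB d' r := gp_mem_BB d' r a b
      have hga : g ≤ d' r a := gp_le_left d' r hd a b
      have hgb : g ≤ d' r b := by
        rw [hg, gp_comm d' r hd a b]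
        exact gp_le_left d' r hd b a
      set m := vmk d' r hd a g with hm
      have hm' : m = vmk d' r hd b g := by
        rw [hm, vmk_eq d' r hd hg1 hga hg1 hgb]
        exact ⟨rfl, le_refl _⟩
      have h₁ : ∃ k, par^[k] (φ a) = m :=
        anc d' r hd a (hdra a) hg1 hga (le_refl _)
      have h₂ : ∃ k, par^[k] (φ b) = m := by
        rw [hm']
        exact anc d' r hd b (hdra b) hg1 hgb (le_refl _)
      set P₁ := walkTo hρ hμ (φ a) m h₁ with hP₁
      set P₂ := walkTo hρ hμ (φ b) m h₂ with hP₂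
      have key : ∀ x, x ∈ P₁.support → x ∈ P₂.support → x = m := by
        intro x hx1 hx2
        obtain ⟨⟨n1, hn1⟩, ⟨k1, hk1⟩, -⟩ := walkTo_support hρ hμ h₁ x hx1
        obtain ⟨⟨n2, hn2⟩, ⟨k2, hk2⟩, -⟩ := walkTo_support hρ hμ h₂ x hx2
        obtain ⟨s1, hs1B, hs1t, hs1d, hs1e⟩ := iterP d' r hd a n1 (hdra a) (le_refl _)
        obtain ⟨s2, hs2B, hs2t, hs2d, hs2e⟩ := iterP d' r hd b n2 (hdra b) (le_refl _)
        have hx1' : x = vmk d' r hd a s1 := by rw [← hn1, hs1e]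
        have hx2' : x = vmk d' r hd b s2 := by rw [← hn2, hs2e]
        have hgx : g ≤ ht x := by
          have := htU_iterate_le d' r hd k1 x
          rw [hk1] at this
          rw [hm, htU_vmk d' r hd hg1 hga] at this
          exact this
        have hts1 : ht x = s1 := by rw [hx1', hht]; exact htU_vmk d' r hd hs1B hs1d
        have heq : s1 = s2 ∧ s1 ≤ gp d' r a b := by
          rw [← vmk_eq d' r hd hs1B hs1d hs2B hs2d, ← hx1', ← hx2']
        have hgs1 : g ≤ s1 := hts1 ▸ hgx
        have hs1g : s1 = g := le_antisymm (hg ▸ heq.2) hgs1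
        rw [hx1', hs1g, ← hm]
      have h1p : P₁.IsPath := walkTo_isPath hρ hμ h₁
      have h2p : P₂.reverse.IsPath := (walkTo_isPath hρ hμ h₂).reverse
      have h2supp : P₂.reverse.support = m :: P₂.reverse.support.tail :=
        SimpleGraph.Walk.support_eq_cons _
      have h2nodup : P₂.reverse.support.Nodup := SimpleGraph.Walk.isPath_def _ |>.mp h2p
      have hmnotin : m ∉ P₂.reverse.support.tail := by
        intro hmem
        rw [h2supp] at h2nodup
        exact (List.nodup_cons.mp h2nodup).1 hmem
      have htail : ∀ x ∈ P₂.reverse.support.tail, x ∈ P₂.support := by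
        intro x hx
        have : x ∈ P₂.reverse.support := by
          rw [h2supp]
          exact List.mem_cons_of_mem _ hx
        rwa [SimpleGraph.Walk.support_reverse, List.mem_reverse] at this
      set P := P₁.append P₂.reverse with hP
      have hPpath : P.IsPath := by
        rw [hP, SimpleGraph.Walk.isPath_def, SimpleGraph.Walk.support_append,
          List.nodup_append]
        refine ⟨SimpleGraph.Walk.isPath_def _ |>.mp h1p, ?_, ?_⟩
        · rw [h2supp] at h2nodup
          exact (List.nodup_cons.mp h2nodup).2
        · intro x hx1 x' hx2 hxx
          subst hxx
          have hxm : x = m := key x hx1 (htail x hx2)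
          exact hmnotin (hxm ▸ hx2)
      have hsum : ((P.edges.map w).sum) = d i j := by
        have hs1 : ((P₁.edges.map w).sum) = ht (φ a) - ht m :=
          walkTo_sum hρ hμ w ht hw h₁
        have hs2 : ((P₂.edges.map w).sum) = ht (φ b) - ht m :=
          walkTo_sum hρ hμ w ht hw h₂
        have hta : ht (φ a) = d' r a := htU_vmk d' r hd (hdra a) (le_refl _)
        have htb : ht (φ b) = d' r b := htU_vmk d' r hd (hdra b) (le_refl _)
        have htm : ht m = g := htU_vmk d' r hd hg1 hga
        rw [hP, SimpleGraph.Walk.edges_append, List.map_append, List.sum_append,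
          SimpleGraph.Walk.edges_reverse, List.map_reverse, List.sum_reverse,
          hs1, hs2, hta, htb, htm, hdij, hg]
        have : gp d' r a b = (d' r a + d' r b - d' a b) / 2 := rfl
        rw [this]
        ring
      have huniq : p = P := by
        have := (pGraph_isAcyclic hρ hμ).path_unique ⟨p, hp⟩ ⟨P, hPpath⟩
        exact Subtype.ext_iff.mp this
      rw [huniq, hsum]
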